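/- Let G be a finite subgroup of GL(n, ℚ), and let p₁, …, p_r ∈ ℚ[v₁, …, v_n] be homogeneous polynomials that generate the invariant ring ℚ[v₁, …, v_n]^G as a ℚ-algebra. Then G = O(p₁, …, p_r) = {g ∈ GL(n, ℚ) : p_i ∘ g = p_i for all i = 1, …, r}. -/
import Mathlib

open MvPolynomial

/-- Substitution of a matrix `g` into a multivariate polynomial: `(q ∘ g)(v) = q(g·v)`. -/
noncomputable def polyComp {R : Type*} [CommSemiring R] {n : ℕ}
    (q : MvPolynomial (Fin n) R) (g : Matrix (Fin n) (Fin n) R) : MvPolynomial (Fin n) R :=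
  bind₁ (fun i => ∑ j, C (g i j) * X j) q

/-- The action of `GL(n, ℚ)` on `ℚ[v₁, …, v_n]` given by `(g · p)(u) = p(g⁻¹·u)`. -/
noncomputable def glAct {n : ℕ} (g : GL (Fin n) ℚ) (p : MvPolynomial (Fin n) ℚ) :
    MvPolynomial (Fin n) ℚ :=
  polyComp p ((g⁻¹ : GL (Fin n) ℚ) : Matrix (Fin n) (Fin n) ℚ)

lemma eval_polyComp {n : ℕ} (q : MvPolynomial (Fin n) ℚ) (g : Matrix (Fin n) (Fin n) ℚ)
    (v : Fin n → ℚ) : eval v (polyComp q g) = eval (g.mulVec v) q := by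
  rw [polyComp, hom_bind₁]
  have h1 : ((eval v : MvPolynomial (Fin n) ℚ →+* ℚ).comp C) = RingHom.id ℚ := by
    ext x; simp
  have h2 : (fun i => eval v (∑ j, C (g i j) * X j)) = g.mulVec v := by
    funext i; simp [Matrix.mulVec, dotProduct]
  rw [h1, h2]
  rfl

lemma polyComp_comp {n : ℕ} (q : MvPolynomial (Fin n) ℚ) (h g : Matrix (Fin n) (Fin n) ℚ) :
    polyComp (polyComp q h) g = polyComp q (h * g) := by
  apply MvPolynomial.funext
  intro v
  simp [eval_polyComp, Matrix.mulVec_mulVec]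

/-- Indicator-building lemma: a polynomial that is 1 at `s` and 0 on `A \ {s}`. -/
lemma exists_indicator {n : ℕ} (A : Finset (Fin n → ℚ)) (s : Fin n → ℚ) :
    ∃ χ : MvPolynomial (Fin n) ℚ, eval s χ = 1 ∧ ∀ a ∈ A, a ≠ s → eval a χ = 0 := by
  classical
  have key : ∀ a : {x // x ∈ A.erase s}, ∃ j : Fin n, (a : Fin n → ℚ) j ≠ s j := by
    rintro ⟨a, ha⟩
    exact Function.ne_iff.mp (Finset.ne_of_mem_erase ha)
  choose j hj using key
  refine ⟨∏ a ∈ (A.erase s).attach,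
      C ((s (j a) - (a : Fin n → ℚ) (j a))⁻¹) * (X (j a) - C ((a : Fin n → ℚ) (j a))), ?_, ?_⟩
  · rw [map_prod]
    apply Finset.prod_eq_one
    intro a _
    have hne : s (j a) - (a : Fin n → ℚ) (j a) ≠ 0 := sub_ne_zero.mpr (hj a).symm
    simp [inv_mul_cancel₀ hne]
  · intro a haA has
    have ha : a ∈ A.erase s := Finset.mem_erase.mpr ⟨has, haA⟩
    rw [map_prod]
    apply Finset.prod_eq_zero (Finset.mem_attach _ ⟨a, ha⟩)
    simp

/-- Let `G` be a finite subgroup of `GL(n, ℚ)` and let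
`p₁, …, p_r ∈ ℚ[v₁, …, v_n]` be homogeneous polynomials generating the invariant ring
`ℚ[v₁, …, v_n]^G` as a `ℚ`-algebra. Then
`G = O(p₁, …, p_r) = {g ∈ GL(n, ℚ) : p_i ∘ g = p_i for all i = 1, …, r}`. -/
theorem stmt_3 {n : ℕ} (G : Subgroup (GL (Fin n) ℚ)) (hG : Finite G)
    (r : ℕ) (p : Fin r → MvPolynomial (Fin n) ℚ)
    (hhom : ∀ i, ∃ d : ℕ, (p i).IsHomogeneous d)
    (hgen : (Algebra.adjoin ℚ (Set.range p) : Set (MvPolynomial (Fin n) ℚ)) =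
      {q : MvPolynomial (Fin n) ℚ | ∀ h ∈ G, glAct h q = q}) :
    (G : Set (GL (Fin n) ℚ)) =
      {g : GL (Fin n) ℚ |
        ∀ i, polyComp (p i) (g : Matrix (Fin n) (Fin n) ℚ) = p i} := by
  classical
  have hGfin : Fintype G := Fintype.ofFinite G
  ext g
  simp only [Set.mem_setOf_eq, SetLike.mem_coe]
  constructor
  · -- easy direction
    intro hgG i
    have hpmem : p i ∈ (Algebra.adjoin ℚ (Set.range p) : Set (MvPolynomial (Fin n) ℚ)) :=
      Algebra.subset_adjoin ⟨i, rfl⟩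
    rw [hgen] at hpmem
    have := hpmem g⁻¹ (inv_mem hgG)
    rwa [glAct, inv_inv] at this
  · -- hard direction
    intro hg
    -- g fixes every element of the invariant ring
    have hfix : ∀ q : MvPolynomial (Fin n) ℚ, (∀ h ∈ G, glAct h q = q) →
        polyComp q (g : Matrix (Fin n) (Fin n) ℚ) = q := by
      intro q hq
      have hq' : q ∈ (Algebra.adjoin ℚ (Set.range p) : Set (MvPolynomial (Fin n) ℚ)) := by
        rw [hgen]; exact hq
      have hle : Algebra.adjoin ℚ (Set.range p) ≤
          AlgHom.equalizer
            (bind₁ (fun i => ∑ j, C ((g : Matrix (Fin n) (Fin n) ℚ) i j) * X j))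
            (AlgHom.id ℚ (MvPolynomial (Fin n) ℚ)) := by
        apply Algebra.adjoin_le
        rintro _ ⟨i, rfl⟩
        exact hg i
      exact hle hq'
    by_contra hgG
    -- g differs from every element of G as a matrix
    have hne : ∀ h : G, (g : Matrix (Fin n) (Fin n) ℚ) -
        ((h : GL (Fin n) ℚ) : Matrix (Fin n) (Fin n) ℚ) ≠ 0 := by
      intro h hcontra
      exact hgG ((Units.ext (sub_eq_zero.mp hcontra)) ▸ h.2)
    set M : G → Matrix (Fin n) (Fin n) ℚ :=
      fun h => (g : Matrix (Fin n) (Fin n) ℚ) -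
        ((h : GL (Fin n) ℚ) : Matrix (Fin n) (Fin n) ℚ) with hM
    have hPne : ∀ h : G,
        (∑ i, (∑ j, C (M h i j) * X j) ^ 2 : MvPolynomial (Fin n) ℚ) ≠ 0 := by
      intro h
      obtain ⟨i0, j0, hij⟩ : ∃ i0 j0, M h i0 j0 ≠ 0 := by
        by_contra hc
        push_neg at hc
        exact hne h (by ext i j; exact hc i j)
      intro hP0
      have heval : ∀ i, eval (Pi.single j0 (1 : ℚ)) (∑ j, C (M h i j) * X j) = M h i j0 := by
        intro i
        rw [map_sum, Finset.sum_eq_single j0]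
        · simp
        · intro b _ hb; simp [Pi.single_eq_of_ne hb]
        · simp
      have h0 : ∑ i, (M h i j0) ^ 2 = 0 := by
        have hc := congrArg (eval (Pi.single j0 (1 : ℚ))) hP0
        rw [map_zero, map_sum] at hc
        rw [← hc]
        exact Finset.sum_congr rfl (fun i _ => by rw [map_pow, heval i])
      have hall := (Finset.sum_eq_zero_iff_of_nonneg
        (fun i _ => sq_nonneg (M h i j0))).mp h0 i0 (Finset.mem_univ i0)
      exact hij (by simpa using hall)
    have hQne : (∏ h : G, ∑ i, (∑ j, C (M h i j) * X j) ^ 2 : MvPolynomial (Fin n) ℚ) ≠ 0 :=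
      Finset.prod_ne_zero_iff.mpr (fun h _ => hPne h)
    obtain ⟨v, hv0⟩ : ∃ v : Fin n → ℚ,
        eval v (∏ h : G, ∑ i, (∑ j, C (M h i j) * X j) ^ 2) ≠ 0 := by
      by_contra hc
      push_neg at hc
      exact hQne (MvPolynomial.funext (fun x => by rw [hc x, map_zero]))
    have hv : ∀ h : G, (g : Matrix (Fin n) (Fin n) ℚ).mulVec v ≠
        ((h : GL (Fin n) ℚ) : Matrix (Fin n) (Fin n) ℚ).mulVec v := by
      intro h hcontra
      apply hv0
      rw [map_prod]
      apply Finset.prod_eq_zero (Finset.mem_univ h)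
      rw [map_sum]
      apply Finset.sum_eq_zero
      intro i _
      have he : eval v (∑ j, C (M h i j) * X j) = (M h).mulVec v i := by
        simp [Matrix.mulVec, dotProduct]
      have hz : (M h).mulVec v = 0 := by
        rw [hM]; rw [Matrix.sub_mulVec, hcontra, sub_self]
      rw [map_pow, he, hz]
      simp
    -- orbit sets
    set S : Finset (Fin n → ℚ) :=
      Finset.image (fun h : G => ((h : GL (Fin n) ℚ) : Matrix (Fin n) (Fin n) ℚ).mulVec v)
        Finset.univ with hS
    set T : Finset (Fin n → ℚ) :=
      Finset.image (fun h : G =>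
        (((h : GL (Fin n) ℚ) : Matrix (Fin n) (Fin n) ℚ) *
          (g : Matrix (Fin n) (Fin n) ℚ)).mulVec v) Finset.univ with hT
    have hdisj : ∀ t ∈ T, t ∉ S := by
      intro t htT htS
      rw [hT, Finset.mem_image] at htT
      rw [hS, Finset.mem_image] at htS
      obtain ⟨h, -, rfl⟩ := htT
      obtain ⟨h', -, heq⟩ := htS
      apply hv (h⁻¹ * h')
      have hstep := congrArg
        (fun w => (((h⁻¹ : G) : GL (Fin n) ℚ) : Matrix (Fin n) (Fin n) ℚ).mulVec w) heq.symm
      simp only [Matrix.mulVec_mulVec] at hstep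
      have hinv : (((h⁻¹ : G) : GL (Fin n) ℚ) : Matrix (Fin n) (Fin n) ℚ) *
          ((h : GL (Fin n) ℚ) : Matrix (Fin n) (Fin n) ℚ) = 1 := by
        have h1 : ((h⁻¹ : G) : GL (Fin n) ℚ) = ((h : GL (Fin n) ℚ))⁻¹ := rfl
        rw [h1]
        exact_mod_cast (h : GL (Fin n) ℚ).inv_mul
      rw [← mul_assoc, hinv, one_mul] at hstep
      rw [hstep]
      rfl
    -- indicator polynomial of T relative to S ∪ T
    choose χ hχ1 hχ0 using fun t : Fin n → ℚ => exists_indicator (S ∪ T) t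
    set f : MvPolynomial (Fin n) ℚ := ∑ t ∈ T, χ t with hf
    have hfS : ∀ s ∈ S, eval s f = 0 := by
      intro s hsS
      rw [hf, map_sum]
      apply Finset.sum_eq_zero
      intro t htT
      exact hχ0 t s (Finset.mem_union_left _ hsS) (fun hst => hdisj t htT (hst ▸ hsS))
    have hfT : ∀ t ∈ T, eval t f = 1 := by
      intro t htT
      rw [hf, map_sum, Finset.sum_eq_single t]
      · exact hχ1 t
      · intro b hbT hbt
        exact hχ0 b t (Finset.mem_union_right _ htT) (Ne.symm hbt)
      · intro hc; exact absurd htT hc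
    -- the invariant polynomial
    set q : MvPolynomial (Fin n) ℚ :=
      ∏ h : G, polyComp f ((h : GL (Fin n) ℚ) : Matrix (Fin n) (Fin n) ℚ) with hq
    have hqinv : ∀ k ∈ G, glAct k q = q := by
      intro k hk
      set c : G := (⟨k, hk⟩ : G)⁻¹ with hc
      have step1 : glAct k q =
          ∏ h : G, polyComp (polyComp f ((h : GL (Fin n) ℚ) : Matrix (Fin n) (Fin n) ℚ))
            ((k⁻¹ : GL (Fin n) ℚ) : Matrix (Fin n) (Fin n) ℚ) := by
        rw [glAct, hq, polyComp, map_prod]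
        rfl
      rw [step1]
      have step2 : ∀ h : G,
          polyComp (polyComp f ((h : GL (Fin n) ℚ) : Matrix (Fin n) (Fin n) ℚ))
            ((k⁻¹ : GL (Fin n) ℚ) : Matrix (Fin n) (Fin n) ℚ) =
          polyComp f (((h * c : G) : GL (Fin n) ℚ) : Matrix (Fin n) (Fin n) ℚ) := by
        intro h
        rw [polyComp_comp]
        rfl
      rw [Finset.prod_congr rfl (fun h _ => step2 h), hq]
      exact Fintype.prod_equiv (Equiv.mulRight c)
        (fun h => polyComp f (((h * c : G) : GL (Fin n) ℚ) : Matrix (Fin n) (Fin n) ℚ))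
        (fun h => polyComp f ((h : GL (Fin n) ℚ) : Matrix (Fin n) (Fin n) ℚ))
        (fun h => rfl)
    have hfixq := hfix q hqinv
    have h1 : eval v (polyComp q (g : Matrix (Fin n) (Fin n) ℚ)) = 1 := by
      rw [eval_polyComp, hq, map_prod]
      apply Finset.prod_eq_one
      intro h _
      rw [eval_polyComp, Matrix.mulVec_mulVec]
      exact hfT _ (Finset.mem_image.mpr ⟨h, Finset.mem_univ h, rfl⟩)
    have h0 : eval v q = 0 := by
      rw [hq, map_prod]
      apply Finset.prod_eq_zero (Finset.mem_univ (1 : G))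
      rw [eval_polyComp]
      exact hfS _ (Finset.mem_image.mpr ⟨1, Finset.mem_univ 1, rfl⟩)
    rw [hfixq, h0] at h1
    exact zero_ne_one h1
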